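/- arXiv:1908.03113 — 3 statements merged into one kernel-verified Lean document; each statement's English description precedes it below -/
import Mathlib

section
/- For any z on the unit circle, any complex number a with |a| ≥ 1, and any real r with 0 < r < 1, one has |z - a| ≤ 2|rz - a|. -/
theorem stmt0 (z a : ℂ) (hz : ‖z‖ = 1) (ha : 1 ≤ ‖a‖) (r : ℝ)
    (hr0 : 0 < r) (hr1 : r < 1) :
    ‖z - a‖ ≤ 2 * ‖(r : ℂ) * z - a‖ := by
  have h1 : ‖z - (r : ℂ) * z‖ = 1 - r := by
    have : z - (r : ℂ) * z = (1 - (r : ℂ)) * z := by ring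
    rw [this, norm_mul, hz, mul_one]
    rw [show (1 - (r : ℂ)) = ((1 - r : ℝ) : ℂ) by push_cast; ring]
    rw [Complex.norm_real, Real.norm_of_nonneg (by linarith)]
  have h2 : 1 - r ≤ ‖(r : ℂ) * z - a‖ := by
    have := norm_sub_norm_le ((r : ℂ) * z) a
    have hrz : ‖(r : ℂ) * z‖ = r := by
      rw [norm_mul, hz, mul_one, Complex.norm_real, Real.norm_of_nonneg hr0.le]
    rw [hrz] at this
    have habs : |r - ‖a‖| ≤ ‖(r : ℂ) * z - a‖ := by
      rw [abs_sub_comm]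
      calc |‖a‖ - r| = ‖a‖ - r := abs_of_pos (by linarith)
        _ ≤ ‖a - (r : ℂ) * z‖ := by
            have := norm_sub_norm_le a ((r : ℂ) * z)
            rw [hrz] at this; linarith
        _ = ‖(r : ℂ) * z - a‖ := norm_sub_rev _ _
    calc 1 - r ≤ ‖a‖ - r := by linarith
      _ = |‖a‖ - r| := (abs_of_pos (by linarith)).symm
      _ = |r - ‖a‖| := abs_sub_comm _ _
      _ ≤ _ := habs
  calc ‖z - a‖ ≤ ‖z - (r : ℂ) * z‖ + ‖(r : ℂ) * z - a‖ := norm_sub_le_norm_sub_add_norm_sub _ _ _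
    _ = (1 - r) + ‖(r : ℂ) * z - a‖ := by rw [h1]
    _ ≤ 2 * ‖(r : ℂ) * z - a‖ := by linarith
end

section
/- A nonzero square-summable sequence (a_n)_{n≥1} of complex numbers is totally multiplicative (i.e., a_{mn} = a_m a_n for all m, n ≥ 1) if and only if there exists a sequence (λ_k)_{k≥1} of complex numbers with ∑_k |λ_k|² < ∞ and each |λ_k| < 1, such that a_n = ∏_k λ_k^{ν_{p_k}(n)} for every n ≥ 1, where ν_{p_k}(n) is the exponent of the k-th prime p_k in the factorization of n. -/
open Function

private lemma msupp_finite (lam : ℕ → ℂ) {n : ℕ} (_hn : n ≠ 0) :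
    (Function.mulSupport fun k => lam k ^ (n.factorization (Nat.nth Nat.Prime k))).Finite := by
  apply Set.Finite.subset
    ((n.factorization.support.finite_toSet).preimage
      ((Nat.nth_injective Nat.infinite_setOf_prime).injOn))
  intro k hk
  simp only [Function.mem_mulSupport] at hk
  simp only [Set.mem_preimage, Finset.coe_sort_coe, Finset.mem_coe,
    Finsupp.mem_support_iff]
  intro h
  rw [h, pow_zero] at hk
  exact hk rfl

/-- A nonzero square-summable sequence is totally multiplicative iff it is of the
form `a n = ∏ k, λ k ^ ν_{p_k}(n)` for a square-summable sequence `λ` with `|λ k| < 1`,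
where `p_k = Nat.nth Nat.Prime k` is the `k`-th prime. -/
theorem stmt1 (a : ℕ → ℂ) (ha : ∃ n, 0 < n ∧ a n ≠ 0)
    (hsum : Summable fun n => ‖a n‖ ^ 2) :
    (∀ m n : ℕ, 0 < m → 0 < n → a (m * n) = a m * a n) ↔
      ∃ lam : ℕ → ℂ, (Summable fun k => ‖lam k‖ ^ 2) ∧ (∀ k, ‖lam k‖ < 1) ∧
        ∀ n : ℕ, 0 < n →
          a n = ∏ᶠ k : ℕ, lam k ^ (n.factorization (Nat.nth Nat.Prime k)) := by
  constructor
  · intro hmul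
    obtain ⟨n₀, hn₀, hne₀⟩ := ha
    have a1 : a 1 = 1 := by
      have h := hmul n₀ 1 hn₀ one_pos
      rw [mul_one] at h
      have h' : a n₀ * 1 = a n₀ * a 1 := by rw [mul_one]; exact h
      exact (mul_left_cancel₀ hne₀ h').symm
    have apow : ∀ p e : ℕ, 0 < p → a (p ^ e) = a p ^ e := by
      intro p e hp
      induction e with
      | zero => simpa using a1
      | succ e ih =>
          rw [pow_succ, pow_succ, hmul _ _ (pow_pos hp e) hp, ih]
    have alt1 : ∀ p : ℕ, 2 ≤ p → ‖a p‖ < 1 := by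
      intro p hp
      by_contra hge
      push_neg at hge
      have hinj : Function.Injective fun j : ℕ => p ^ j :=
        Nat.pow_right_injective hp
      have hs : Summable fun j : ℕ => ‖a (p ^ j)‖ ^ 2 := hsum.comp_injective hinj
      have htend := hs.tendsto_atTop_zero
      have hev : ∀ᶠ j in Filter.atTop, ‖a (p ^ j)‖ ^ 2 < 1 :=
        htend.eventually (gt_mem_nhds one_pos)
      obtain ⟨j, hj⟩ := hev.exists
      rw [apow p j (by omega), norm_pow] at hj
      have : (1 : ℝ) ≤ ‖a p‖ ^ j := one_le_pow₀ hge
      nlinarith [pow_nonneg (norm_nonneg (a p)) j]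
    refine ⟨fun k => a (Nat.nth Nat.Prime k), ?_, ?_, ?_⟩
    · exact hsum.comp_injective (Nat.nth_injective Nat.infinite_setOf_prime)
    · intro k
      exact alt1 _ (Nat.prime_nth_prime k).two_le
    · intro n hn
      -- a n = ∏ p in support, a p ^ ν
      have key : ∀ s : Finset ℕ, ∀ e : ℕ → ℕ, (∀ p ∈ s, 0 < p) →
          a (∏ p ∈ s, p ^ e p) = ∏ p ∈ s, a p ^ e p := by
        intro s
        induction s using Finset.induction with
        | empty => intro e _; simpa using a1
        | insert _ _ hx ih =>
            rename_i q s
            intro e hpos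
            rw [Finset.prod_insert hx, Finset.prod_insert hx,
              hmul _ _ (pow_pos (hpos q (Finset.mem_insert_self q s)) _)
                (Finset.prod_pos fun p hp => pow_pos (hpos p (Finset.mem_insert_of_mem hp)) _),
              apow _ _ (hpos q (Finset.mem_insert_self q s)),
              ih e (fun p hp => hpos p (Finset.mem_insert_of_mem hp))]
      have hfac : a n = ∏ p ∈ n.factorization.support, a p ^ n.factorization p := by
        conv_lhs => rw [← Nat.factorization_prod_pow_eq_self hn.ne']
        rw [Finsupp.prod]
        exact key _ _ fun p hp => (Nat.prime_of_mem_primeFactors hp).pos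
      rw [hfac]
      have hsub : (Function.mulSupport fun k =>
            a (Nat.nth Nat.Prime k) ^ (n.factorization (Nat.nth Nat.Prime k))) ⊆
          ↑(n.factorization.support.image (Nat.count Nat.Prime)) := by
        intro k hk
        simp only [Function.mem_mulSupport] at hk
        have hne : n.factorization (Nat.nth Nat.Prime k) ≠ 0 := by
          intro h; rw [h, pow_zero] at hk; exact hk rfl
        have hmem : Nat.nth Nat.Prime k ∈ n.factorization.support :=
          Finsupp.mem_support_iff.2 hne
        simp only [Finset.coe_image, Set.mem_image, Finset.mem_coe]
        exact ⟨Nat.nth Nat.Prime k, hmem,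
          Nat.count_nth_of_infinite Nat.infinite_setOf_prime k⟩
      rw [finprod_eq_prod_of_mulSupport_subset _ hsub]
      rw [Finset.prod_image ?hinj]
      case hinj =>
        intro p hp q hq hpq
        have hp' := Nat.prime_of_mem_primeFactors hp
        have hq' := Nat.prime_of_mem_primeFactors hq
        have := congrArg (Nat.nth Nat.Prime) hpq
        rwa [Nat.nth_count hp', Nat.nth_count hq'] at this
      refine Finset.prod_congr rfl fun p hp => ?_
      rw [Nat.nth_count (Nat.prime_of_mem_primeFactors hp)]
  · rintro ⟨lam, _, _, hrep⟩
    intro m n hm hn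
    rw [hrep _ (mul_pos hm hn), hrep m hm, hrep n hn,
      ← finprod_mul_distrib (msupp_finite lam hm.ne') (msupp_finite lam hn.ne')]
    apply finprod_congr
    intro k
    rw [Nat.factorization_mul hm.ne' hn.ne', Finsupp.add_apply, pow_add]
end

section
/- Let 𝒫₁, 𝒫₂, … be a partition of the set of primes, and for each k let 𝒩_k be the multiplicative subsemigroup of ℕ generated by 𝒫_k ∪ {1}. If an absolutely summable sequence (a_n)_{n≥1} of complex numbers satisfies a_{mn} = a_m a_n whenever for each k at least one of m, n has no prime factor in 𝒫_k, then ∑_{n=1}^∞ a_n = ∏_{k=1}^∞ (∑_{m ∈ 𝒩_k} a_m). -/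
open Filter Topology

private lemma decomp_aux (Q : ℕ → Prop) {N : ℕ} (hN : 0 < N) :
    ∃ m n : ℕ, m * n = N ∧ 0 < m ∧ 0 < n ∧
      (∀ p, Nat.Prime p → p ∣ m → p ∣ N ∧ Q p) ∧
      (∀ p, Nat.Prime p → p ∣ n → p ∣ N ∧ ¬ Q p) := by
  classical
  refine ⟨∏ p ∈ N.primeFactors.filter Q, p ^ N.factorization p,
          ∏ p ∈ N.primeFactors.filter (fun p => ¬ Q p), p ^ N.factorization p, ?_, ?_, ?_, ?_, ?_⟩
  · rw [Finset.prod_filter_mul_prod_filter_not]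
    have := Nat.factorization_prod_pow_eq_self hN.ne'
    rwa [Finsupp.prod, Nat.support_factorization] at this
  · exact Finset.prod_pos fun p hp =>
      pow_pos (Nat.prime_of_mem_primeFactors (Finset.mem_filter.mp hp).1).pos _
  · exact Finset.prod_pos fun p hp =>
      pow_pos (Nat.prime_of_mem_primeFactors (Finset.mem_filter.mp hp).1).pos _
  · intro p hp hdvd
    obtain ⟨q, hq, hpq⟩ := (hp.prime.dvd_finset_prod_iff _).mp hdvd
    obtain ⟨hq1, hq2⟩ := Finset.mem_filter.mp hq
    have : p = q := (Nat.prime_dvd_prime_iff_eq hp (Nat.prime_of_mem_primeFactors hq1)).mp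
      (hp.prime.dvd_of_dvd_pow hpq)
    subst this
    exact ⟨Nat.dvd_of_mem_primeFactors hq1, hq2⟩
  · intro p hp hdvd
    obtain ⟨q, hq, hpq⟩ := (hp.prime.dvd_finset_prod_iff _).mp hdvd
    obtain ⟨hq1, hq2⟩ := Finset.mem_filter.mp hq
    have : p = q := (Nat.prime_dvd_prime_iff_eq hp (Nat.prime_of_mem_primeFactors hq1)).mp
      (hp.prime.dvd_of_dvd_pow hpq)
    subst this
    exact ⟨Nat.dvd_of_mem_primeFactors hq1, hq2⟩

private lemma unique_aux (Q : ℕ → Prop) {m₁ n₁ m₂ n₂ : ℕ} (hm₁ : 0 < m₁)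
    (h1 : ∀ p, Nat.Prime p → p ∣ m₁ → Q p) (h2 : ∀ p, Nat.Prime p → p ∣ n₁ → ¬ Q p)
    (h3 : ∀ p, Nat.Prime p → p ∣ m₂ → Q p) (h4 : ∀ p, Nat.Prime p → p ∣ n₂ → ¬ Q p)
    (heq : m₁ * n₁ = m₂ * n₂) : m₁ = m₂ ∧ n₁ = n₂ := by
  have cop : ∀ m n : ℕ, (∀ p, Nat.Prime p → p ∣ m → Q p) →
      (∀ p, Nat.Prime p → p ∣ n → ¬ Q p) → Nat.Coprime m n := by
    intro m n hm hn
    by_contra hc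
    obtain ⟨p, hp, hpm, hpn⟩ := Nat.Prime.not_coprime_iff_dvd.mp hc
    exact hn p hp hpn (hm p hp hpm)
  have hd1 : m₁ ∣ m₂ := (cop m₁ n₂ h1 h4).dvd_of_dvd_mul_right ⟨n₁, heq.symm⟩
  have hd2 : m₂ ∣ m₁ := (cop m₂ n₁ h3 h2).dvd_of_dvd_mul_right ⟨n₂, heq⟩
  have hm : m₁ = m₂ := Nat.dvd_antisymm hd1 hd2
  subst hm
  exact ⟨rfl, Nat.eq_of_mul_eq_mul_left hm₁ heq⟩

/-- For a partition `P` of the primes and a `Δ`-multiplicative absolutely summable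
sequence, the sum factors as the product over `k` of the sums over the semigroup
`𝒩_k` generated by `P k ∪ {1}`. -/
theorem stmt5 (P : ℕ → Set ℕ)
    (hprime : ∀ k, ∀ p ∈ P k, Nat.Prime p)
    (hdisj : ∀ k l, k ≠ l → Disjoint (P k) (P l))
    (hcover : ∀ p : ℕ, Nat.Prime p → ∃ k, p ∈ P k)
    (a : ℕ → ℂ) (h0 : a 0 = 0) (hsum : Summable fun n => ‖a n‖)
    (hmul : ∀ m n : ℕ, 0 < m → 0 < n →
      (∀ k, (∀ p ∈ P k, ¬ p ∣ m) ∨ (∀ p ∈ P k, ¬ p ∣ n)) →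
      a (m * n) = a m * a n) :
    ∑' n : ℕ, a n =
      ∏' k : ℕ, ∑' m : {n : ℕ // 0 < n ∧ ∀ p : ℕ, Nat.Prime p → p ∣ n → p ∈ P k},
        a m.1 := by
  classical
  have hsa : Summable a := hsum.of_norm
  have h1sq : a 1 = a 1 * a 1 := by
    simpa using hmul 1 1 one_pos one_pos
      (fun k => Or.inl fun p hp hd => (hprime k p hp).ne_one (Nat.dvd_one.mp hd))
  have h1cases : a 1 = 0 ∨ a 1 = 1 := by
    rcases mul_eq_zero.mp (show a 1 * (a 1 - 1) = 0 by linear_combination -h1sq) with h | h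
    · exact Or.inl h
    · exact Or.inr (sub_eq_zero.mp h)
  rcases h1cases with h1 | h1
  · -- degenerate case: a ≡ 0
    have ha : ∀ n, a n = 0 := by
      intro n
      rcases Nat.eq_zero_or_pos n with h | h
      · rw [h, h0]
      · have := hmul n 1 h one_pos
          (fun k => Or.inr fun p hp hd => (hprime k p hp).ne_one (Nat.dvd_one.mp hd))
        rw [mul_one] at this
        rw [this, h1, mul_zero]
    have hz : HasProd (fun _ : ℕ => (0 : ℂ)) 0 := by
      have hev : (fun s : Finset ℕ => ∏ _i ∈ s, (0 : ℂ)) =ᶠ[atTop] fun _ => (0 : ℂ) := by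
        filter_upwards [Filter.eventually_ge_atTop ({0} : Finset ℕ)] with s hs
        exact Finset.prod_eq_zero (hs (Finset.mem_singleton_self 0)) rfl
      exact (tendsto_congr' hev).mpr tendsto_const_nhds
    simp only [ha, tsum_zero]
    exact hz.tprod_eq.symm
  · -- main case: a 1 = 1
    set M : Finset ℕ → Set ℕ :=
      fun F => {n : ℕ | 0 < n ∧ ∀ p : ℕ, Nat.Prime p → p ∣ n → ∃ k ∈ F, p ∈ P k} with hM
    have key : ∀ F : Finset ℕ,
        (∏ k ∈ F, ∑' m : {n : ℕ // 0 < n ∧ ∀ p : ℕ, Nat.Prime p → p ∣ n → p ∈ P k}, a m.1)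
          = ∑' n : M F, a n.1 := by
      intro F
      induction F using Finset.induction_on with
      | empty =>
        have hMe : M (∅ : Finset ℕ) = {1} := by
          ext n
          simp only [hM, Set.mem_setOf_eq, Set.mem_singleton_iff, Finset.notMem_empty]
          constructor
          · rintro ⟨hn, hp⟩
            by_contra hne
            obtain ⟨p, hp', hpd⟩ := Nat.exists_prime_and_dvd hne
            obtain ⟨k, hk, _⟩ := hp p hp' hpd
            exact hk
          · rintro rfl
            exact ⟨one_pos, fun p hp hd => absurd (Nat.dvd_one.mp hd) hp.ne_one⟩
        rw [Finset.prod_empty, hMe, tsum_singleton 1 a, h1]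
      | @insert k F hk ih =>
        rw [Finset.prod_insert hk, ih]
        -- abbreviations
        set A : Set ℕ := {n : ℕ | 0 < n ∧ ∀ p : ℕ, Nat.Prime p → p ∣ n → p ∈ P k} with hA
        -- a prime dividing an element of M F is not in P k
        have hnotk : ∀ n ∈ M F, ∀ p : ℕ, Nat.Prime p → p ∣ n → p ∉ P k := by
          intro n hn p hp hd hpk
          obtain ⟨l, hl, hpl⟩ := hn.2 p hp hd
          have hlk : l ≠ k := fun h => hk (h ▸ hl)
          exact Set.disjoint_left.mp (hdisj l k hlk) hpl hpk
        -- the multiplication bijection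
        have hmem : ∀ z : A × M F, (z.1.1 * z.2.1 : ℕ) ∈ M (insert k F) := by
          rintro ⟨⟨m, hm⟩, ⟨n, hn⟩⟩
          refine ⟨mul_pos hm.1 hn.1, fun p hp hd => ?_⟩
          rcases (Nat.Prime.dvd_mul hp).mp hd with h | h
          · exact ⟨k, Finset.mem_insert_self k F, hm.2 p hp h⟩
          · obtain ⟨l, hl, hpl⟩ := hn.2 p hp h
            exact ⟨l, Finset.mem_insert_of_mem hl, hpl⟩
        let φ : A × M F → M (insert k F) := fun z => ⟨z.1.1 * z.2.1, hmem z⟩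
        have hinj : Function.Injective φ := by
          rintro ⟨⟨m₁, hm₁⟩, ⟨n₁, hn₁⟩⟩ ⟨⟨m₂, hm₂⟩, ⟨n₂, hn₂⟩⟩ hzz
          have heq : m₁ * n₁ = m₂ * n₂ := congrArg Subtype.val hzz
          obtain ⟨e1, e2⟩ := unique_aux (· ∈ P k) hm₁.1
            (fun p hp hd => hm₁.2 p hp hd) (fun p hp hd => hnotk n₁ hn₁ p hp hd)
            (fun p hp hd => hm₂.2 p hp hd) (fun p hp hd => hnotk n₂ hn₂ p hp hd) heq
          simp only [Prod.mk.injEq, Subtype.mk.injEq]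
          exact ⟨e1, e2⟩
        have hsurj : Function.Surjective φ := by
          rintro ⟨N, hN⟩
          obtain ⟨m, n, hmn, hm0, hn0, hmQ, hnQ⟩ := decomp_aux (· ∈ P k) hN.1
          have hmA : m ∈ A := ⟨hm0, fun p hp hd => (hmQ p hp hd).2⟩
          have hnM : n ∈ M F := by
            refine ⟨hn0, fun p hp hd => ?_⟩
            obtain ⟨hdN, hpk⟩ := hnQ p hp hd
            obtain ⟨l, hl, hpl⟩ := hN.2 p hp hdN
            rcases Finset.mem_insert.mp hl with rfl | hlF
            · exact absurd hpl hpk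
            · exact ⟨l, hlF, hpl⟩
          exact ⟨⟨⟨m, hmA⟩, ⟨n, hnM⟩⟩, Subtype.ext hmn⟩
        let e : A × M F ≃ M (insert k F) := Equiv.ofBijective φ ⟨hinj, hsurj⟩
        have hval : ∀ z : A × M F, a z.1.1 * a z.2.1 = a ((e z).1 : ℕ) := by
          rintro ⟨⟨m, hm⟩, ⟨n, hn⟩⟩
          show a m * a n = a (m * n)
          refine (hmul m n hm.1 hn.1 fun l => ?_).symm
          by_cases hlk : l = k
          · subst hlk
            exact Or.inr fun p hp hd => hnotk n hn p (hprime l p hp) hd hp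
          · refine Or.inl fun p hp hd => ?_
            have hpk : p ∈ P k := hm.2 p (hprime l p hp) hd
            exact Set.disjoint_left.mp (hdisj l k hlk) hp hpk
        calc (∑' m : A, a m.1) * ∑' n : M F, a n.1
            = ∑' z : A × M F, a z.1.1 * a z.2.1 :=
              tsum_mul_tsum_of_summable_norm (hsum.subtype A) (hsum.subtype (M F))
          _ = ∑' z : A × M F, a ((e z).1 : ℕ) := tsum_congr fun z => hval z
          _ = ∑' w : M (insert k F), a w.1 := e.tsum_eq fun w : M (insert k F) => a w.1
    -- the limit argument
    have hT : HasProd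
        (fun k : ℕ => ∑' m : {n : ℕ // 0 < n ∧ ∀ p : ℕ, Nat.Prime p → p ∣ n → p ∈ P k}, a m.1)
        (∑' n : ℕ, a n) := by
      have : Filter.Tendsto (fun F : Finset ℕ =>
          ∏ k ∈ F, ∑' m : {n : ℕ // 0 < n ∧ ∀ p : ℕ, Nat.Prime p → p ∣ n → p ∈ P k}, a m.1)
          atTop (𝓝 (∑' n : ℕ, a n)) := by
        rw [Metric.tendsto_nhds]
        intro ε hε
        -- choose a finite set capturing most of the mass
        have htail := tendsto_tsum_compl_atTop_zero (fun n : ℕ => ‖a n‖)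
        rw [Metric.tendsto_nhds] at htail
        obtain ⟨s₀, hs₀⟩ := Filter.eventually_atTop.mp (htail ε hε)
        have hs₀' : ∑' n : {x : ℕ // x ∉ s₀}, ‖a n.1‖ < ε := by
          have := hs₀ s₀ le_rfl
          rwa [Real.dist_eq, sub_zero,
            abs_of_nonneg (tsum_nonneg fun n => norm_nonneg _)] at this
        -- the class of a prime
        set κ : ℕ → ℕ := fun p => if h : Nat.Prime p then (hcover p h).choose else 0 with hκ
        have hκspec : ∀ p : ℕ, Nat.Prime p → p ∈ P (κ p) := by
          intro p hp
          simp only [hκ, dif_pos hp]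
          exact (hcover p hp).choose_spec
        set F₀ : Finset ℕ := s₀.biUnion (fun n => n.primeFactors.image κ) with hF₀
        rw [Filter.eventually_atTop]
        refine ⟨F₀, fun F hF => ?_⟩
        rw [key F]
        -- every nonzero element of s₀ is in M F
        have hmem : ∀ n ∈ s₀, n ≠ 0 → n ∈ M F := by
          intro n hns hn0
          refine ⟨Nat.pos_of_ne_zero hn0, fun p hp hd => ?_⟩
          refine ⟨κ p, hF ?_, hκspec p hp⟩
          exact Finset.mem_biUnion.mpr ⟨n, hns,
            Finset.mem_image.mpr ⟨p, Nat.mem_primeFactors.mpr ⟨hp, hd, hn0⟩, rfl⟩⟩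
        -- the error estimate
        have hsplit := hsa.tsum_subtype_add_tsum_subtype_compl (M F)
        have hle1 : ‖∑' n : ↥(M F)ᶜ, a n.1‖ ≤ ∑' n : ↥(M F)ᶜ, ‖a n.1‖ :=
          norm_tsum_le_tsum_norm (hsum.subtype _)
        have hle2 : ∑' n : ↥(M F)ᶜ, ‖a n.1‖ ≤ ∑' n : {x : ℕ | x ∉ s₀}, ‖a n.1‖ := by
          rw [tsum_subtype ((M F)ᶜ) (fun n => ‖a n‖),
            tsum_subtype {x : ℕ | x ∉ s₀} (fun n => ‖a n‖)]
          refine (hsum.indicator _).tsum_le_tsum (fun n => ?_) (hsum.indicator _)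
          by_cases hn : n ∈ (M F)ᶜ
          · rw [Set.indicator_of_mem hn]
            by_cases hns : n ∈ s₀
            · rcases eq_or_ne n 0 with rfl | hn0
              · simp [h0, Set.indicator_nonneg]
              · exact absurd (hmem n hns hn0) hn
            · rw [Set.indicator_of_mem (by exact hns : n ∈ {x : ℕ | x ∉ s₀})]
          · rw [Set.indicator_of_notMem hn]
            exact Set.indicator_nonneg (fun x _ => norm_nonneg _) n
        rw [dist_eq_norm]
        have : (∑' n : M F, a n.1) - ∑' n : ℕ, a n = -∑' n : ↥(M F)ᶜ, a n.1 := by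
          rw [← hsplit]; ring
        rw [this, norm_neg]
        exact lt_of_le_of_lt (le_trans hle1 hle2) hs₀'
      exact this
    exact hT.tprod_eq.symm
end
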